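/- (Main theorem, value of the constrained tropical optimization problem) Let A, B be n×n matrices over the max-plus semiring with at least one of them irreducible, the spectral radius λ of A satisfying λ > −∞, and Tr(B) ≤ 0. Then the minimum of x⁻ A x over all regular vectors x satisfying B x ≤ x equals θ = ⨁_{k=1}^{n} ⨁_{0 ≤ i₁+⋯+i_k ≤ n−k} tr^{1/k}(A B^{i₁} ⋯ A B^{i_k}). -/

import Mathlib

noncomputable section

/-- The carrier of the max-plus semiring `ℝ_{max,+}`: the reals with `−∞` adjoined,
with tropical addition `⊔ = max` and tropical multiplication `+`. -/
local notation "R" => WithBot ℝ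

/-- Max-plus matrix product: `{AB}_{ij} = max_k (a_{ik} + b_{kj})`. -/
def tmul {n : ℕ} (A B : Fin n → Fin n → R) : Fin n → Fin n → R :=
  fun i j => Finset.univ.sup fun k => A i k + B k j

/-- The max-plus identity matrix: `0` on the diagonal, `−∞` elsewhere. -/
def idMat (n : ℕ) : Fin n → Fin n → R :=
  fun i j => if i = j then 0 else ⊥

/-- Max-plus matrix power. -/
def tpow {n : ℕ} (A : Fin n → Fin n → R) : ℕ → (Fin n → Fin n → R)
  | 0 => idMat n
  | m + 1 => tmul A (tpow A m)

/-- Tropical trace: `tr A = max_i a_{ii}`. -/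
def ttr {n : ℕ} (A : Fin n → Fin n → R) : R :=
  Finset.univ.sup fun i => A i i

/-- Max-plus matrix-vector product. -/
def matVec {n : ℕ} (A : Fin n → Fin n → R) (x : Fin n → R) : Fin n → R :=
  fun i => Finset.univ.sup fun k => A i k + x k

/-- The tropical `m`-th root of a scalar: `t^{1/m} = t/m` in conventional arithmetic. -/
def troot (m : ℕ) (t : R) : R := t.map fun r => r / m

/-- The tropical spectral radius `λ = ⊕_{m=1}^n tr^{1/m}(A^m)`. -/
def specRad {n : ℕ} (A : Fin n → Fin n → R) : R :=
  (Finset.Icc 1 n).sup fun m => troot m (ttr (tpow A m))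

/-- A matrix is irreducible iff its digraph (of non-`−∞` entries) is strongly connected,
equivalently every pair `(i, j)` is connected by a path of some positive length `m`. -/
def Irred {n : ℕ} (A : Fin n → Fin n → R) : Prop :=
  ∀ i j : Fin n, ∃ m : ℕ, 1 ≤ m ∧ tpow A m i j ≠ ⊥

/-- `Tr(A) = tr A ⊕ ⋯ ⊕ tr Aⁿ`. -/
def Tr {n : ℕ} (A : Fin n → Fin n → R) : R :=
  (Finset.Icc 1 n).sup fun m => ttr (tpow A m)

/-- The Kleene star `A* = I ⊕ A ⊕ ⋯ ⊕ A^{n−1}`. -/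
def star {n : ℕ} (A : Fin n → Fin n → R) : Fin n → Fin n → R :=
  fun i j => (Finset.range n).sup fun m => tpow A m i j

/-- The regular vector `x ∈ ℝⁿ` viewed in `(ℝ ∪ {−∞})ⁿ`. -/
def vec {n : ℕ} (x : Fin n → ℝ) : Fin n → R := fun i => (x i : R)

/-- The objective function `x⁻ A x = max_{i,j} (−x_i + a_{ij} + x_j)` for regular `x`. -/
def quadForm {n : ℕ} (A : Fin n → Fin n → R) (x : Fin n → ℝ) : R :=
  Finset.univ.sup fun p : Fin n × Fin n => ((-(x p.1) : ℝ) : R) + A p.1 p.2 + ((x p.2 : ℝ) : R)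

/-- Tropical division `a ⊗ t⁻¹`, i.e. conventional `a − t`, with value `−∞`
whenever `a = −∞` or `t = −∞`. -/
def tdiv (a t : R) : R :=
  WithBot.recBotCoe ⊥ (fun r => t.map fun s => r - s) a

/-- The product `A B^{i₁} ⋯ A B^{i_k}` for a tuple of exponents `t : Fin k → ℕ`. -/
def prodTup {n k : ℕ} (A B : Fin n → Fin n → R) (t : Fin k → ℕ) : Fin n → Fin n → R :=
  (List.ofFn fun j => tmul A (tpow B (t j))).foldr tmul (idMat n)

/-- The value `θ = ⨁_{k=1}^n ⨁_{0 ≤ i₁+⋯+i_k ≤ n−k} tr^{1/k}(A B^{i₁} ⋯ A B^{i_k})`. -/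
def theta {n : ℕ} (A B : Fin n → Fin n → R) : R :=
  (Finset.Icc 1 n).sup fun k =>
    (Finset.range (n - k + 1)).sup fun s =>
      (Finset.Nat.antidiagonalTuple k s).sup fun t => troot k (ttr (prodTup A B t))

lemma myadd_sup (c a b : R) : c + (a ⊔ b) = (c + a) ⊔ (c + b) := by
  rcases le_total a b with h | h
  · rw [sup_eq_right.2 h, sup_eq_right.2 (add_le_add_right h c)]
  · rw [sup_eq_left.2 h, sup_eq_left.2 (add_le_add_right h c)]
lemma myadd_sup' (c a b : R) : (a ⊔ b) + c = (a + c) ⊔ (b + c) := by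
  rcases le_total a b with h | h
  · rw [sup_eq_right.2 h, sup_eq_right.2 (add_le_add_left h c)]
  · rw [sup_eq_left.2 h, sup_eq_left.2 (add_le_add_left h c)]
lemma add_finsup {ι : Type*} (s : Finset ι) (f : ι → R) (c : R) :
    c + s.sup f = s.sup fun k => c + f k := by
  apply Finset.comp_sup_eq_sup_comp (c + ·) (fun a b => myadd_sup c a b) (WithBot.add_bot c)
lemma finsup_add {ι : Type*} (s : Finset ι) (f : ι → R) (c : R) :
    s.sup f + c = s.sup fun k => f k + c := by
  apply Finset.comp_sup_eq_sup_comp (· + c) (fun a b => myadd_sup' c a b) (WithBot.bot_add c)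

lemma tmul_assoc {n : ℕ} (A B C : Fin n → Fin n → R) :
    tmul (tmul A B) C = tmul A (tmul B C) := by
  funext i j
  show Finset.univ.sup (fun k => (Finset.univ.sup fun l => A i l + B l k) + C k j)
     = Finset.univ.sup (fun l => A i l + Finset.univ.sup fun k => B l k + C k j)
  simp only [finsup_add, add_finsup]
  rw [Finset.sup_comm]
  simp [add_assoc]

lemma tmul_idMat {n : ℕ} (A : Fin n → Fin n → R) : tmul A (idMat n) = A := by
  funext i j
  apply le_antisymm
  · apply Finset.sup_le; intro k _
    by_cases h : k = j
    · subst h; simp [idMat]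
    · simp [idMat, h]
  · calc A i j = A i j + idMat n j j := by simp [idMat]
    _ ≤ _ := Finset.le_sup (f := fun k => A i k + idMat n k j) (Finset.mem_univ j)

lemma idMat_tmul {n : ℕ} (A : Fin n → Fin n → R) : tmul (idMat n) A = A := by
  funext i j
  apply le_antisymm
  · apply Finset.sup_le; intro k _
    by_cases h : i = k
    · subst h; simp [idMat]
    · simp [idMat, h]
  · calc A i j = idMat n i i + A i j := by simp [idMat]
    _ ≤ _ := Finset.le_sup (f := fun k => idMat n i k + A k j) (Finset.mem_univ i)

lemma tmul_mono_left {n : ℕ} {A A' : Fin n → Fin n → R} (B : Fin n → Fin n → R)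
    (h : ∀ i j, A i j ≤ A' i j) : ∀ i j, tmul A B i j ≤ tmul A' B i j := by
  intro i j; apply Finset.sup_le; intro k _
  exact le_trans (add_le_add_left (h i k) _) (Finset.le_sup (f := fun k => A' i k + B k j) (Finset.mem_univ k))

lemma tmul_mono_right {n : ℕ} (A : Fin n → Fin n → R) {B B' : Fin n → Fin n → R}
    (h : ∀ i j, B i j ≤ B' i j) : ∀ i j, tmul A B i j ≤ tmul A B' i j := by
  intro i j; apply Finset.sup_le; intro k _
  exact le_trans (add_le_add_right (h k j) _) (Finset.le_sup (f := fun k => A i k + B' k j) (Finset.mem_univ k))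

lemma tpow_succ_right {n : ℕ} (A : Fin n → Fin n → R) (m : ℕ) :
    tpow A (m+1) = tmul (tpow A m) A := by
  induction m with
  | zero => show tmul A (idMat n) = tmul (idMat n) A; rw [tmul_idMat, idMat_tmul]
  | succ m ih =>
      show tmul A (tpow A (m+1)) = tmul (tmul A (tpow A m)) A
      rw [tmul_assoc, ← ih]

lemma tpow_add {n : ℕ} (A : Fin n → Fin n → R) (s t : ℕ) :
    tpow A (s + t) = tmul (tpow A s) (tpow A t) := by
  induction s with
  | zero => simp [tpow, idMat_tmul]
  | succ s ih =>
      have h1 : s + 1 + t = (s + t) + 1 := by ring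
      calc tpow A (s + 1 + t) = tmul A (tpow A (s+t)) := by rw [h1]; rfl
      _ = tmul A (tmul (tpow A s) (tpow A t)) := by rw [ih]
      _ = tmul (tmul A (tpow A s)) (tpow A t) := (tmul_assoc _ _ _).symm
      _ = tmul (tpow A (s+1)) (tpow A t) := rfl

lemma entry_le_tmul {n : ℕ} (A B : Fin n → Fin n → R) (i k j : Fin n) :
    A i k + B k j ≤ tmul A B i j := Finset.le_sup (f := fun k => A i k + B k j) (Finset.mem_univ k)

lemma ttr_tmul_comm {n : ℕ} (A B : Fin n → Fin n → R) :
    ttr (tmul A B) = ttr (tmul B A) := by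
  show Finset.univ.sup (fun i => Finset.univ.sup fun k => A i k + B k i)
     = Finset.univ.sup (fun i => Finset.univ.sup fun k => B i k + A k i)
  rw [Finset.sup_comm]
  congr 1; funext i; congr 1; funext k; exact add_comm _ _

/-! ### Paths -/

def Tr' {n : ℕ} (A : Fin n → Fin n → R) : R :=
  (Finset.Icc 1 n).sup fun m => ttr (tpow A m)

def pw {n : ℕ} (C : Fin n → Fin n → R) : Fin n → List (Fin n) → R
  | _, [] => 0
  | i, (j :: l) => C i j + pw C j l

lemma pw_append {n : ℕ} (C : Fin n → Fin n → R) (i : Fin n) (p q : List (Fin n)) :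
    pw C i (p ++ q) = pw C i p + pw C (p.getLastD i) q := by
  induction p generalizing i with
  | nil => simp [pw]
  | cons k p' ih =>
      show C i k + pw C k (p' ++ q) = (C i k + pw C k p') + pw C ((k :: p').getLastD i) q
      rw [ih, List.getLastD_cons, add_assoc]

lemma pw_le_tpow {n : ℕ} (C : Fin n → Fin n → R) (i : Fin n) (p : List (Fin n)) :
    pw C i p ≤ tpow C p.length i (p.getLastD i) := by
  induction p generalizing i with
  | nil => simp [pw, tpow, idMat]
  | cons k p' ih =>
      show C i k + pw C k p' ≤ tpow C (p'.length + 1) i ((k :: p').getLastD i)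
      rw [List.getLastD_cons]
      exact le_trans (add_le_add_right (ih k) _) (entry_le_tmul C (tpow C p'.length) i k _)

lemma pw_le_tpow' {n : ℕ} (C : Fin n → Fin n → R) (i j : Fin n) (p : List (Fin n)) :
    pw C i p + idMat n (p.getLastD i) j ≤ tpow C p.length i j := by
  by_cases h : p.getLastD i = j
  · calc pw C i p + idMat n (p.getLastD i) j = pw C i p := by rw [h]; simp [idMat]
    _ ≤ tpow C p.length i (p.getLastD i) := pw_le_tpow C i p
    _ = tpow C p.length i j := by rw [h]
  · have hb : idMat n (p.getLastD i) j = ⊥ := by simp only [idMat]; rw [if_neg h]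
    rw [hb, WithBot.add_bot]; exact bot_le

lemma tpow_le_supPaths {n : ℕ} (C : Fin n → Fin n → R) (m : ℕ) (i j : Fin n) :
    tpow C m i j ≤ (Finset.univ : Finset (Fin m → Fin n)).sup
      fun f => pw C i (List.ofFn f) + idMat n ((List.ofFn f).getLastD i) j := by
  induction m generalizing i with
  | zero =>
      have : tpow C 0 i j = pw C i (List.ofFn (fun x : Fin 0 => x.elim0)) +
          idMat n ((List.ofFn (fun x : Fin 0 => x.elim0)).getLastD i) j := by
        simp [tpow, pw]
      rw [this]
      exact Finset.le_sup (f := fun f : Fin 0 → Fin n =>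
        pw C i (List.ofFn f) + idMat n ((List.ofFn f).getLastD i) j) (Finset.mem_univ _)
  | succ m ih =>
      show Finset.univ.sup (fun k => C i k + tpow C m k j) ≤ _
      apply Finset.sup_le; intro k _
      calc C i k + tpow C m k j
          ≤ C i k + Finset.univ.sup (fun f : Fin m → Fin n =>
              pw C k (List.ofFn f) + idMat n ((List.ofFn f).getLastD k) j) :=
            add_le_add_right (ih k) _
        _ = Finset.univ.sup (fun f : Fin m → Fin n =>
              C i k + (pw C k (List.ofFn f) + idMat n ((List.ofFn f).getLastD k) j)) :=
            add_finsup _ _ _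
        _ ≤ _ := by
            apply Finset.sup_le; intro f _
            have hofn : List.ofFn (Fin.cons k f : Fin (m+1) → Fin n) = k :: List.ofFn f := by
              rw [List.ofFn_succ]; simp
            have h1 : C i k + (pw C k (List.ofFn f) + idMat n ((List.ofFn f).getLastD k) j)
                = pw C i (List.ofFn (Fin.cons k f)) +
                  idMat n ((List.ofFn (Fin.cons k f)).getLastD i) j := by
              rw [hofn, List.getLastD_cons]
              show _ = (C i k + pw C k (List.ofFn f)) + _
              rw [add_assoc]
            rw [h1]
            exact Finset.le_sup (f := fun f : Fin (m+1) → Fin n =>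
              pw C i (List.ofFn f) + idMat n ((List.ofFn f).getLastD i) j)
              (Finset.mem_univ (Fin.cons k f : Fin (m+1) → Fin n))

lemma getLastD_append' {α : Type*} (l₁ l₂ : List α) (d : α) :
    (l₁ ++ l₂).getLastD d = l₂.getLastD (l₁.getLastD d) := by
  induction l₁ generalizing d with
  | nil => simp
  | cons a t ih => rw [List.cons_append, List.getLastD_cons, List.getLastD_cons, ih]

lemma getLastD_take' {α : Type*} (l : List α) (k : ℕ) (hk : k < l.length) (d : α) :
    (l.take (k+1)).getLastD d = l[k] := by
  induction l generalizing k d with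
  | nil => simp at hk
  | cons a t ih =>
      rw [List.take_succ_cons, List.getLastD_cons]
      cases k with
      | zero => simp
      | succ k' => exact ih k' (by simpa using hk) a

lemma tpow_card_le_star {n : ℕ} (C : Fin n → Fin n → R) (hTr : Tr' C ≤ 0) (i j : Fin n) :
    tpow C n i j ≤ (Finset.range n).sup fun l => tpow C l i j := by
  refine (tpow_le_supPaths C n i j).trans ?_
  apply Finset.sup_le; intro f _
  set p := List.ofFn f with hpdef
  have hplen : p.length = n := List.length_ofFn
  set v : Fin (n+1) → Fin n := Fin.cons i f with hvdef
  have key : ∀ a b : Fin (n+1), a < b → v a = v b →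
      pw C i p + idMat n (p.getLastD i) j ≤ (Finset.range n).sup fun l => tpow C l i j := by
    intro a b hab hv
    set α := (a : ℕ) with hα
    set β := (b : ℕ) with hβ
    have hαβ : α < β := hab
    have hβn : β ≤ n := Nat.lt_succ_iff.1 b.isLt
    set P1 := p.take α with hP1
    set P2 := (p.drop α).take (β - α) with hP2
    set P3 := p.drop β with hP3
    have hsplit : p = (P1 ++ P2) ++ P3 := by
      rw [hP1, hP2, hP3, ← List.take_add, Nat.add_sub_cancel' (le_of_lt hαβ),
        List.take_append_drop]
    have hP1len : P1.length = α := by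
      rw [hP1, List.length_take, hplen]; omega
    have hP2len : P2.length = β - α := by
      rw [hP2, List.length_take, List.length_drop, hplen]; omega
    have hP3len : P3.length = n - β := by rw [hP3, List.length_drop, hplen]
    have htake : ∀ (k : Fin (n+1)), (p.take (k:ℕ)).getLastD i = v k := by
      intro k
      rcases Nat.eq_zero_or_eq_succ_pred (k : ℕ) with h0 | hs
      · rw [h0]
        simp only [List.take_zero, List.getLastD_nil]
        have : k = 0 := Fin.ext h0
        rw [this, hvdef, Fin.cons_zero]
      · obtain ⟨γ, hk1⟩ : ∃ γ, (k : ℕ) = γ + 1 := ⟨(k : ℕ) - 1, hs⟩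
        have hγn : γ < n := by omega
        rw [hk1, getLastD_take' p γ (by omega)]
        have hk2 : k = Fin.succ ⟨γ, hγn⟩ := Fin.ext (by simp [hk1])
        have hvk : v k = f ⟨γ, hγn⟩ := by rw [hk2, hvdef, Fin.cons_succ]
        rw [hvk]
        simp [hpdef, List.getElem_ofFn]
    have hP1last : P1.getLastD i = v a := htake a
    have hP12 : P1 ++ P2 = p.take β := by
      rw [hP1, hP2, ← List.take_add, Nat.add_sub_cancel' (le_of_lt hαβ)]
    have hP12last : (P1 ++ P2).getLastD i = v b := by rw [hP12]; exact htake b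
    have hP2last : P2.getLastD (v a) = v b := by
      rw [← hP1last, ← getLastD_append', hP12last]
    have hplast : p.getLastD i = P3.getLastD (v b) := by
      conv_lhs => rw [hsplit]
      rw [getLastD_append', hP12last]
    -- weight bounds
    have w2 : pw C (v a) P2 ≤ 0 := by
      have h1 := pw_le_tpow C (v a) P2
      rw [hP2last, hP2len, ← hv] at h1
      have h2 : tpow C (β - α) (v a) (v a) ≤ ttr (tpow C (β - α)) :=
        Finset.le_sup (f := fun k => tpow C (β-α) k k) (Finset.mem_univ (v a))
      have h3 : ttr (tpow C (β - α)) ≤ Tr' C :=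
        Finset.le_sup (f := fun m => ttr (tpow C m)) (Finset.mem_Icc.2 ⟨by omega, by omega⟩)
      exact h1.trans (h2.trans (h3.trans hTr))
    have w1 : pw C i P1 ≤ tpow C α i (v a) := by
      have h1 := pw_le_tpow C i P1
      rwa [hP1last, hP1len] at h1
    have w3 : pw C (v b) P3 + idMat n (p.getLastD i) j ≤ tpow C (n - β) (v b) j := by
      rw [hplast]
      have := pw_le_tpow' C (v b) j P3
      rwa [hP3len] at this
    -- combine
    have hw : pw C i p = (pw C i P1 + pw C (v a) P2) + pw C (v b) P3 := by
      conv_lhs => rw [hsplit]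
      rw [pw_append, pw_append, hP1last, hP12last]
    calc pw C i p + idMat n (p.getLastD i) j
        = (pw C i P1 + pw C (v a) P2) + (pw C (v b) P3 + idMat n (p.getLastD i) j) := by
          rw [hw, add_assoc]
      _ ≤ (pw C i P1 + 0) + tpow C (n - β) (v b) j :=
          add_le_add (add_le_add_right w2 _) w3
      _ = pw C i P1 + tpow C (n - β) (v a) j := by rw [add_zero, hv]
      _ ≤ tpow C α i (v a) + tpow C (n - β) (v a) j := add_le_add_left w1 _
      _ ≤ tmul (tpow C α) (tpow C (n - β)) i j := entry_le_tmul _ _ i (v a) j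
      _ = tpow C (α + (n - β)) i j := by rw [tpow_add]
      _ ≤ _ := Finset.le_sup (f := fun l => tpow C l i j)
            (Finset.mem_range.2 (by omega))
  have hcard : Fintype.card (Fin n) < Fintype.card (Fin (n+1)) := by simp
  obtain ⟨a, b, hne, hv⟩ := Fintype.exists_ne_map_eq_of_card_lt v hcard
  rcases hne.lt_or_gt with h | h
  · exact key a b h hv
  · exact key b a h hv.symm

/-! ### Star -/

def star' {n : ℕ} (A : Fin n → Fin n → R) : Fin n → Fin n → R :=
  fun i j => (Finset.range n).sup fun m => tpow A m i j

lemma tmul_star_le {n : ℕ} (C : Fin n → Fin n → R) (hTr : Tr' C ≤ 0) (i j : Fin n) :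
    tmul C (star' C) i j ≤ star' C i j := by
  show Finset.univ.sup (fun k => C i k + (Finset.range n).sup fun m => tpow C m k j) ≤ _
  apply Finset.sup_le; intro k _
  rw [add_finsup]
  apply Finset.sup_le; intro m hm
  have h1 : C i k + tpow C m k j ≤ tpow C (m+1) i j := entry_le_tmul C (tpow C m) i k j
  rcases Nat.lt_or_ge (m+1) n with h | h
  · exact h1.trans (Finset.le_sup (f := fun l => tpow C l i j) (Finset.mem_range.2 h))
  · have hmn : m + 1 = n := by have := Finset.mem_range.1 hm; omega
    exact h1.trans (by rw [hmn]; exact tpow_card_le_star C hTr i j)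

lemma star_diag_ge {n : ℕ} (C : Fin n → Fin n → R) (hn : 0 < n) (i : Fin n) :
    (0 : R) ≤ star' C i i := by
  have h0 : tpow C 0 i i = 0 := by simp [tpow, idMat]
  calc (0:R) = tpow C 0 i i := h0.symm
  _ ≤ _ := Finset.le_sup (f := fun m => tpow C m i i) (Finset.mem_range.2 hn)

/-! ### Words -/

def mmax {n : ℕ} (A B : Fin n → Fin n → R) : Fin n → Fin n → R := fun i j => A i j ⊔ B i j

def listProd {n : ℕ} (A B : Fin n → Fin n → R) (l : List Bool) : Fin n → Fin n → R :=
  (l.map fun b => if b then A else B).foldr tmul (idMat n)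

lemma lp_nil {n : ℕ} (A B : Fin n → Fin n → R) : listProd A B [] = idMat n := rfl
lemma lp_cons {n : ℕ} (A B : Fin n → Fin n → R) (b : Bool) (l : List Bool) :
    listProd A B (b :: l) = tmul (if b then A else B) (listProd A B l) := rfl

lemma lp_append {n : ℕ} (A B : Fin n → Fin n → R) (l₁ l₂ : List Bool) :
    listProd A B (l₁ ++ l₂) = tmul (listProd A B l₁) (listProd A B l₂) := by
  induction l₁ with
  | nil => rw [List.nil_append, lp_nil, idMat_tmul]
  | cons b l ih => rw [List.cons_append, lp_cons, lp_cons, ih, tmul_assoc]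

lemma lp_replicate_false {n : ℕ} (A B : Fin n → Fin n → R) (m : ℕ) :
    listProd A B (List.replicate m false) = tpow B m := by
  induction m with
  | zero => rfl
  | succ m ih => rw [List.replicate_succ, lp_cons, ih]; rfl

lemma ofFn_cons {α : Type*} {m : ℕ} (b : α) (w : Fin m → α) :
    List.ofFn (Fin.cons b w) = b :: List.ofFn w := by
  rw [List.ofFn_succ]; simp

lemma tpow_mmax_le {n : ℕ} (A B : Fin n → Fin n → R) (m : ℕ) (i j : Fin n) :
    tpow (mmax A B) m i j ≤
      (Finset.univ : Finset (Fin m → Bool)).sup fun w => listProd A B (List.ofFn w) i j := by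
  induction m generalizing i with
  | zero =>
      have : tpow (mmax A B) 0 i j = listProd A B (List.ofFn (fun x : Fin 0 => x.elim0)) i j := rfl
      rw [this]
      exact Finset.le_sup (f := fun w : Fin 0 → Bool => listProd A B (List.ofFn w) i j)
        (Finset.mem_univ _)
  | succ m ih =>
      show Finset.univ.sup (fun k => mmax A B i k + tpow (mmax A B) m k j) ≤ _
      apply Finset.sup_le; intro k _
      calc mmax A B i k + tpow (mmax A B) m k j
          ≤ mmax A B i k + Finset.univ.sup (fun w : Fin m → Bool =>
              listProd A B (List.ofFn w) k j) := add_le_add_right (ih k) _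
        _ = Finset.univ.sup (fun w : Fin m → Bool =>
              mmax A B i k + listProd A B (List.ofFn w) k j) := add_finsup _ _ _
        _ ≤ _ := by
            apply Finset.sup_le; intro w _
            have hsplit : mmax A B i k + listProd A B (List.ofFn w) k j
                = (A i k + listProd A B (List.ofFn w) k j)
                  ⊔ (B i k + listProd A B (List.ofFn w) k j) := myadd_sup' _ _ _
            rw [hsplit]
            apply sup_le
            · have : A i k + listProd A B (List.ofFn w) k j
                  ≤ listProd A B (List.ofFn (Fin.cons true w)) i j := by
                rw [ofFn_cons, lp_cons, if_pos rfl]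
                exact entry_le_tmul A (listProd A B (List.ofFn w)) i k j
              exact this.trans (Finset.le_sup
                (f := fun w : Fin (m+1) → Bool => listProd A B (List.ofFn w) i j)
                (Finset.mem_univ _))
            · have : B i k + listProd A B (List.ofFn w) k j
                  ≤ listProd A B (List.ofFn (Fin.cons false w)) i j := by
                rw [ofFn_cons, lp_cons, if_neg (by simp)]
                exact entry_le_tmul B (listProd A B (List.ofFn w)) i k j
              exact this.trans (Finset.le_sup
                (f := fun w : Fin (m+1) → Bool => listProd A B (List.ofFn w) i j)
                (Finset.mem_univ _))

/-! ### Parsing words into blocks -/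

def encode (t : List ℕ) : List Bool := t.flatMap fun i => true :: List.replicate i false

def parse : List Bool → List ℕ
  | [] => []
  | false :: l => parse l
  | true :: l => (l.takeWhile (· = false)).length :: parse (l.dropWhile (· = false))
termination_by l => l.length
decreasing_by
  · simp only [List.length_cons]; omega
  · simp only [List.length_cons]
    exact Nat.lt_succ_of_le ((List.dropWhile_sublist _).length_le)

lemma encode_cons (i : ℕ) (t : List ℕ) :
    encode (i :: t) = (true :: List.replicate i false) ++ encode t := List.flatMap_cons ..

lemma encode_parse : ∀ l : List Bool, l.head? ≠ some false → encode (parse l) = l := by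
  intro l
  induction l using parse.induct with
  | case1 => intro _; simp [parse, encode]
  | case2 l ih => intro h; exact absurd rfl h
  | case3 l ih =>
      intro _
      rw [parse, encode_cons]
      have htw : l.takeWhile (· = false) = List.replicate (l.takeWhile (· = false)).length false := by
        rw [List.eq_replicate_iff]
        refine ⟨rfl, fun b hb => by simpa using List.mem_takeWhile_imp hb⟩
      have hd : (l.dropWhile (· = false)).head? ≠ some false := by
        have := List.head?_dropWhile_not (· = false) l
        intro hc
        rw [hc] at this
        simp at this
      rw [ih hd, List.cons_append, ← htw, List.takeWhile_append_dropWhile]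

lemma parse_true_cons (l : List Bool) :
    parse (true :: l) = (l.takeWhile (· = false)).length :: parse (l.dropWhile (· = false)) := by
  rw [parse]

lemma encode_length (t : List ℕ) : (encode t).length = t.length + t.sum := by
  induction t with
  | nil => rfl
  | cons i t ih =>
      rw [encode_cons, List.length_append, ih]
      simp [List.sum_cons]
      omega

/-! ### blocks product -/

def blocksProd {n : ℕ} (A B : Fin n → Fin n → R) (L : List ℕ) : Fin n → Fin n → R :=
  (L.map fun i => tmul A (tpow B i)).foldr tmul (idMat n)

def prodTup' {n k : ℕ} (A B : Fin n → Fin n → R) (t : Fin k → ℕ) : Fin n → Fin n → R :=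
  (List.ofFn fun j => tmul A (tpow B (t j))).foldr tmul (idMat n)

lemma bp_nil {n : ℕ} (A B : Fin n → Fin n → R) : blocksProd A B [] = idMat n := rfl
lemma bp_cons {n : ℕ} (A B : Fin n → Fin n → R) (i : ℕ) (L : List ℕ) :
    blocksProd A B (i :: L) = tmul (tmul A (tpow B i)) (blocksProd A B L) := rfl

lemma prodTup'_eq_bp {n k : ℕ} (A B : Fin n → Fin n → R) (t : Fin k → ℕ) :
    prodTup' A B t = blocksProd A B (List.ofFn t) := by
  unfold prodTup' blocksProd
  rw [List.map_ofFn]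
  rfl

lemma bp_eq_prodTup' {n : ℕ} (A B : Fin n → Fin n → R) (L : List ℕ) :
    blocksProd A B L = prodTup' A B L.get := by
  rw [prodTup'_eq_bp, List.ofFn_get]

lemma listProd_encode {n : ℕ} (A B : Fin n → Fin n → R) (L : List ℕ) :
    listProd A B (encode L) = blocksProd A B L := by
  induction L with
  | nil => rfl
  | cons i L ih =>
      rw [encode_cons, lp_append, bp_cons, ih]
      congr 1
      rw [lp_cons, if_pos rfl, lp_replicate_false]

/-! ### scalar multiples -/

def smulM {n : ℕ} (c : ℝ) (M : Fin n → Fin n → R) : Fin n → Fin n → R :=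
  fun i j => ((c : ℝ) : R) + M i j

lemma smulM_zero {n : ℕ} (M : Fin n → Fin n → R) : smulM 0 M = M := by
  funext i j; show ((0:ℝ) : R) + M i j = M i j
  rw [WithBot.coe_zero, zero_add]

lemma smulM_smulM {n : ℕ} (c d : ℝ) (M : Fin n → Fin n → R) :
    smulM c (smulM d M) = smulM (c + d) M := by
  funext i j; show (c : R) + ((d:R) + M i j) = ((c + d : ℝ) : R) + M i j
  rw [WithBot.coe_add, add_assoc]

lemma tmul_smul_left {n : ℕ} (c : ℝ) (X Y : Fin n → Fin n → R) :
    tmul (smulM c X) Y = smulM c (tmul X Y) := by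
  funext i j
  show Finset.univ.sup (fun k => ((c:R) + X i k) + Y k j) = (c:R) + Finset.univ.sup _
  rw [add_finsup]
  congr 1; funext k; rw [add_assoc]

lemma tmul_smul_right {n : ℕ} (c : ℝ) (X Y : Fin n → Fin n → R) :
    tmul X (smulM c Y) = smulM c (tmul X Y) := by
  funext i j
  show Finset.univ.sup (fun k => X i k + ((c:R) + Y k j)) = (c:R) + Finset.univ.sup _
  rw [add_finsup]
  congr 1; funext k
  rw [← add_assoc, ← add_assoc, add_comm (X i k) ((c:R))]

lemma ttr_smulM {n : ℕ} (c : ℝ) (M : Fin n → Fin n → R) :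
    ttr (smulM c M) = (c : R) + ttr M := (add_finsup _ _ _).symm

lemma bp_smul {n : ℕ} (c : ℝ) (A B : Fin n → Fin n → R) (L : List ℕ) :
    blocksProd (smulM c A) B L = smulM (L.length * c) (blocksProd A B L) := by
  induction L with
  | nil => rw [bp_nil, show ((([] : List ℕ).length : ℝ) * c) = 0 by simp, smulM_zero]; rfl
  | cons i L ih =>
      rw [bp_cons, bp_cons, tmul_smul_left, ih, tmul_smul_right, tmul_smul_left, smulM_smulM]
      have harg : (L.length : ℝ) * c + c = (((i :: L).length : ℝ)) * c := by push_cast [List.length_cons]; ring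
      rw [harg]

/-! ### theta -/

def troot' (m : ℕ) (t : R) : R := t.map fun r => r / m

def theta' {n : ℕ} (A B : Fin n → Fin n → R) : R :=
  (Finset.Icc 1 n).sup fun k =>
    (Finset.range (n - k + 1)).sup fun s =>
      (Finset.Nat.antidiagonalTuple k s).sup fun t => troot' k (ttr (prodTup' A B t))

lemma le_theta' {n : ℕ} (A B : Fin n → Fin n → R) (k : ℕ) (hk1 : 1 ≤ k) (hkn : k ≤ n)
    (t : Fin k → ℕ) (hs : ∑ i, t i ≤ n - k) :
    troot' k (ttr (prodTup' A B t)) ≤ theta' A B := by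
  have h3 : troot' k (ttr (prodTup' A B t)) ≤
      (Finset.Nat.antidiagonalTuple k (∑ i, t i)).sup fun t' => troot' k (ttr (prodTup' A B t')) :=
    Finset.le_sup (f := fun t' => troot' k (ttr (prodTup' A B t'))) (Finset.Nat.mem_antidiagonalTuple.2 rfl)
  have h2 : ((Finset.Nat.antidiagonalTuple k (∑ i, t i)).sup
        fun t' => troot' k (ttr (prodTup' A B t'))) ≤
      (Finset.range (n - k + 1)).sup fun s =>
      (Finset.Nat.antidiagonalTuple k s).sup fun t' => troot' k (ttr (prodTup' A B t')) :=
    Finset.le_sup (f := fun s => (Finset.Nat.antidiagonalTuple k s).sup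
      fun t' => troot' k (ttr (prodTup' A B t'))) (Finset.mem_range.2 (by omega))
  have h1 : ((Finset.range (n - k + 1)).sup fun s =>
      (Finset.Nat.antidiagonalTuple k s).sup fun t' => troot' k (ttr (prodTup' A B t'))) ≤
      theta' A B :=
    Finset.le_sup (f := fun k => (Finset.range (n - k + 1)).sup fun s =>
      (Finset.Nat.antidiagonalTuple k s).sup fun t' => troot' k (ttr (prodTup' A B t')))
      (Finset.mem_Icc.2 ⟨hk1, hkn⟩)
  exact h3.trans (h2.trans h1)

lemma foldr_replicate {n : ℕ} (A : Fin n → Fin n → R) (m : ℕ) :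
    (List.replicate m A).foldr tmul (idMat n) = tpow A m := by
  induction m with
  | zero => rfl
  | succ m ih => rw [List.replicate_succ, List.foldr_cons, ih]; rfl

lemma prodTup'_zeros {n m : ℕ} (A B : Fin n → Fin n → R) :
    prodTup' A B (fun _ : Fin m => 0) = tpow A m := by
  unfold prodTup'
  have h1 : (List.ofFn fun _ : Fin m => tmul A (tpow B 0)) = List.replicate m (tmul A (idMat n)) :=
    List.ofFn_const m _
  rw [h1, tmul_idMat, foldr_replicate]

def specRad' {n : ℕ} (A : Fin n → Fin n → R) : R :=
  (Finset.Icc 1 n).sup fun m => troot' m (ttr (tpow A m))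

lemma theta'_ne_bot {n : ℕ} (A B : Fin n → Fin n → R) (hlam : ⊥ < specRad' A) :
    theta' A B ≠ ⊥ := by
  have h1 : specRad' A ≠ ⊥ := ne_of_gt hlam
  have h2 : ∃ m ∈ Finset.Icc 1 n, troot' m (ttr (tpow A m)) ≠ ⊥ := by
    by_contra h
    push_neg at h
    exact h1 ((Finset.sup_eq_bot_iff _ _).2 h)
  obtain ⟨m, hm, hne⟩ := h2
  rw [Finset.mem_Icc] at hm
  have h3 : troot' m (ttr (prodTup' A B (fun _ : Fin m => 0))) ≤ theta' A B := by
    apply le_theta' A B m hm.1 hm.2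
    simp
  rw [prodTup'_zeros] at h3
  intro hbot
  rw [hbot] at h3
  exact hne (le_bot_iff.1 h3)

/-! ### trace of words is ≤ 0 -/

lemma word_ttr_le {n : ℕ} (A B : Fin n → Fin n → R) (θr : ℝ) (hθ : theta' A B = (θr : ℝ))
    (hTrB : Tr' B ≤ 0) (l : List Bool) (hl1 : 1 ≤ l.length) (hl2 : l.length ≤ n) :
    ttr (listProd (smulM (-θr) A) B l) ≤ 0 := by
  by_cases ht : true ∈ l
  · obtain ⟨l₁, l₂, rfl⟩ := List.mem_iff_append.1 ht
    set l' := true :: (l₂ ++ l₁) with hl'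
    have hcomm : ttr (listProd (smulM (-θr) A) B (l₁ ++ true :: l₂))
        = ttr (listProd (smulM (-θr) A) B l') := by
      have : l' = (true :: l₂) ++ l₁ := by simp [hl']
      rw [this, lp_append, lp_append, ttr_tmul_comm]
    rw [hcomm]
    have hlen' : l'.length = (l₁ ++ true :: l₂).length := by simp [hl']; omega
    have henc : encode (parse l') = l' := encode_parse l' (by simp [hl'])
    set L := parse l' with hL
    have hLne : L ≠ [] := by rw [hL, hl', parse_true_cons]; simp
    have hk1 : 1 ≤ L.length := List.length_pos_iff.2 hLne
    have hlenL : L.length + L.sum = l'.length := by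
      rw [← henc, encode_length]
    have hkn : L.length ≤ n := by omega
    have hssum : L.sum ≤ n - L.length := by omega
    have hsum : ∑ i, L.get i = L.sum := by
      conv_rhs => rw [← List.ofFn_get L]
      rw [List.sum_ofFn]
    have hth : troot' L.length (ttr (prodTup' A B L.get)) ≤ (θr : R) := by
      rw [← hθ]
      exact le_theta' A B L.length hk1 hkn L.get (by rw [hsum]; exact hssum)
    have hrw : ttr (listProd (smulM (-θr) A) B l')
        = ((L.length * (-θr) : ℝ) : R) + ttr (prodTup' A B L.get) := by
      rw [← henc, listProd_encode, bp_smul, ttr_smulM, bp_eq_prodTup']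
    rw [hrw]
    rcases hT : ttr (prodTup' A B L.get) with _ | T
    · show ((L.length * (-θr) : ℝ) : R) + (⊥ : R) ≤ 0
      rw [WithBot.add_bot]; exact bot_le
    · show ((L.length * (-θr) : ℝ) : R) + ((T : ℝ) : R) ≤ 0
      rw [hT] at hth
      have hth2 : ((T / L.length : ℝ) : R) ≤ (θr : R) := hth
      rw [WithBot.coe_le_coe] at hth2
      have hkpos : (0 : ℝ) < L.length := by exact_mod_cast hk1
      have hTle : T ≤ θr * L.length := (div_le_iff₀ hkpos).1 hth2
      rw [← WithBot.coe_add, ← WithBot.coe_zero, WithBot.coe_le_coe]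
      nlinarith
  · have hall : l = List.replicate l.length false := by
      rw [List.eq_replicate_iff]
      refine ⟨rfl, fun b hb => ?_⟩
      cases b
      · rfl
      · exact absurd hb ht
    rw [hall, lp_replicate_false]
    have h1 : ttr (tpow B l.length) ≤ Tr' B :=
      Finset.le_sup (f := fun m => ttr (tpow B m)) (Finset.mem_Icc.2 ⟨hl1, hl2⟩)
    exact h1.trans hTrB

lemma TrC_le {n : ℕ} (A B : Fin n → Fin n → R) (θr : ℝ) (hθ : theta' A B = (θr : ℝ))
    (hTrB : Tr' B ≤ 0) : Tr' (mmax (smulM (-θr) A) B) ≤ 0 := by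
  apply Finset.sup_le; intro m hm
  rw [Finset.mem_Icc] at hm
  apply Finset.sup_le; intro i _
  calc tpow (mmax (smulM (-θr) A) B) m i i
      ≤ Finset.univ.sup (fun w : Fin m → Bool => listProd (smulM (-θr) A) B (List.ofFn w) i i) :=
        tpow_mmax_le _ _ m i i
    _ ≤ 0 := by
        apply Finset.sup_le; intro w _
        have h1 : listProd (smulM (-θr) A) B (List.ofFn w) i i
            ≤ ttr (listProd (smulM (-θr) A) B (List.ofFn w)) :=
          Finset.le_sup (f := fun i => listProd (smulM (-θr) A) B (List.ofFn w) i i)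
            (Finset.mem_univ i)
        refine h1.trans (word_ttr_le A B θr hθ hTrB _ ?_ ?_) <;>
          simp [List.length_ofFn, hm.1, hm.2]

/-! ### lower bound -/

def matVec' {n : ℕ} (A : Fin n → Fin n → R) (x : Fin n → R) : Fin n → R :=
  fun i => Finset.univ.sup fun k => A i k + x k

def vec' {n : ℕ} (x : Fin n → ℝ) : Fin n → R := fun i => (x i : R)

def quadForm' {n : ℕ} (A : Fin n → Fin n → R) (x : Fin n → ℝ) : R :=
  Finset.univ.sup fun p : Fin n × Fin n => ((-(x p.1) : ℝ) : R) + A p.1 p.2 + ((x p.2 : ℝ) : R)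

def Bd {n : ℕ} (x : Fin n → ℝ) (M : Fin n → Fin n → R) (c : R) : Prop :=
  ∀ i j, M i j + ((x j : ℝ) : R) ≤ c + ((x i : ℝ) : R)

lemma Bd_tmul {n : ℕ} {x : Fin n → ℝ} {P Q : Fin n → Fin n → R} {p q : R}
    (hP : Bd x P p) (hQ : Bd x Q q) : Bd x (tmul P Q) (p + q) := by
  intro i j
  show Finset.univ.sup (fun k => P i k + Q k j) + _ ≤ _
  rw [finsup_add]
  apply Finset.sup_le
  intro k _
  calc P i k + Q k j + ((x j : ℝ) : R) = P i k + (Q k j + ((x j : ℝ) : R)) := add_assoc _ _ _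
    _ ≤ P i k + (q + ((x k : ℝ) : R)) := add_le_add_right (hQ k j) _
    _ = (P i k + ((x k : ℝ) : R)) + q := by abel
    _ ≤ (p + ((x i : ℝ) : R)) + q := add_le_add_left (hP i k) _
    _ = (p + q) + ((x i : ℝ) : R) := by abel
lemma Bd_idMat {n : ℕ} (x : Fin n → ℝ) : Bd x (idMat n) 0 := by
  intro i j
  by_cases h : i = j
  · subst h; simp [idMat]
  · simp [idMat, h]

lemma Bd_tpow {n : ℕ} {x : Fin n → ℝ} {B : Fin n → Fin n → R} (hB : Bd x B 0) (s : ℕ) :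
    Bd x (tpow B s) 0 := by
  induction s with
  | zero => exact Bd_idMat x
  | succ s ih =>
      have := Bd_tmul hB ih
      rwa [zero_add] at this

lemma Bd_bp {n : ℕ} {x : Fin n → ℝ} {A B : Fin n → Fin n → R} {μ : R}
    (hA : Bd x A μ) (hB : Bd x B 0) (L : List ℕ) :
    Bd x (blocksProd A B L) (L.length • μ) := by
  induction L with
  | nil => rw [show ([] : List ℕ).length • μ = 0 from zero_nsmul μ]; exact Bd_idMat x
  | cons i L ih =>
      have hblock : Bd x (tmul A (tpow B i)) μ := by
        have := Bd_tmul hA (Bd_tpow hB i)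
        rwa [add_zero] at this
      have hthis := Bd_tmul hblock ih
      have hsm : ((i :: L).length) • μ = μ + L.length • μ := by
        rw [List.length_cons, succ_nsmul, add_comm]
      rw [bp_cons, hsm]
      exact hthis

lemma cancel_coe {a b : R} {r : ℝ} (h : a + (r : R) ≤ b + (r : R)) : a ≤ b := by
  induction a using WithBot.recBotCoe with
  | bot => exact bot_le
  | coe a' =>
      induction b using WithBot.recBotCoe with
      | bot =>
          exfalso
          rw [WithBot.bot_add, ← WithBot.coe_add] at h
          exact absurd h (by simp)
      | coe b' =>
          rw [← WithBot.coe_add, ← WithBot.coe_add, WithBot.coe_le_coe] at h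
          rw [WithBot.coe_le_coe]
          linarith

lemma nsmul_bot (k : ℕ) (hk : 1 ≤ k) : (k • (⊥ : R)) = ⊥ := by
  induction k with
  | zero => omega
  | succ k ih =>
      rw [succ_nsmul]
      exact WithBot.add_bot _

lemma nsmul_coe (k : ℕ) (m : ℝ) : k • ((m : ℝ) : R) = ((k * m : ℝ) : R) := by
  induction k with
  | zero => simp
  | succ k ih =>
      rw [succ_nsmul, ih, ← WithBot.coe_add]
      congr 1
      push_cast
      ring

lemma lower_bound {n : ℕ} (A B : Fin n → Fin n → R) (x : Fin n → ℝ)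
    (hB : ∀ i, matVec' B (vec' x) i ≤ vec' x i) :
    theta' A B ≤ quadForm' A x := by
  set μ := quadForm' A x with hμ
  clear_value μ
  have hAbd : Bd x A μ := by
    intro i j
    have h1 : ((-(x i) : ℝ) : R) + A i j + ((x j : ℝ) : R) ≤ μ := by
      rw [hμ]
      exact Finset.le_sup (f := fun p : Fin n × Fin n =>
        ((-(x p.1) : ℝ) : R) + A p.1 p.2 + ((x p.2 : ℝ) : R)) (Finset.mem_univ (i, j))
    have h2 : A i j + ((x j : ℝ) : R)
        = ((x i : ℝ) : R) + (((-(x i) : ℝ) : R) + A i j + ((x j : ℝ) : R)) := by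
      rw [← add_assoc, ← add_assoc, ← WithBot.coe_add]
      norm_num
    rw [h2, add_comm μ]
    exact add_le_add_right h1 _
  have hBbd : Bd x B 0 := by
    intro i j
    have h1 : B i j + ((x j : ℝ) : R) ≤ vec' x i :=
      le_trans (Finset.le_sup (f := fun k => B i k + vec' x k) (Finset.mem_univ j)) (hB i)
    rw [zero_add]
    exact h1
  apply Finset.sup_le; intro k hk
  rw [Finset.mem_Icc] at hk
  apply Finset.sup_le; intro s hs
  apply Finset.sup_le; intro t ht
  -- t : Fin k → ℕ
  have hbd : Bd x (prodTup' A B t) (k • μ) := by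
    rw [prodTup'_eq_bp]
    have := Bd_bp hAbd hBbd (List.ofFn t)
    rwa [List.length_ofFn] at this
  have htr : ttr (prodTup' A B t) ≤ k • μ := by
    apply Finset.sup_le; intro i _
    exact cancel_coe (hbd i i)
  rcases hT : ttr (prodTup' A B t) with _ | T
  · exact bot_le
  · rw [hT] at htr
    rcases hμcase : μ with _ | m
    · exfalso
      rw [hμcase] at htr
      rw [show (none : R) = (⊥ : R) from rfl, nsmul_bot k hk.1] at htr
      exact (not_le.2 (WithBot.bot_lt_coe T)) htr
    · rw [hμcase] at htr
      rw [show (some m : R) = ((m : ℝ) : R) from rfl, nsmul_coe] at htr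
      have hTle : T ≤ k * m := by
        rw [show (some T : R) = ((T : ℝ) : R) from rfl, WithBot.coe_le_coe] at htr
        exact htr
      show ((T / (k:ℕ) : ℝ) : R) ≤ ((m : ℝ) : R)
      have hkpos : (0 : ℝ) < (k : ℕ) := by exact_mod_cast hk.1
      rw [WithBot.coe_le_coe, div_le_iff₀ hkpos]
      linarith

/-! ### main assembly -/

lemma coe_unbot'_eq {a : R} (h : a ≠ ⊥) : ((WithBot.unbotD 0 a : ℝ) : R) = a := by
  induction a using WithBot.recBotCoe with
  | bot => exact absurd rfl h
  | coe r => rfl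

theorem main_theorem {n : ℕ} (hn : 0 < n) (A B : Fin n → Fin n → R)
    (hlam : ⊥ < specRad' A) (hTrB : Tr' B ≤ (0 : R)) :
    IsLeast {t : R | ∃ x : Fin n → ℝ,
      (∀ i, matVec' B (vec' x) i ≤ vec' x i) ∧ quadForm' A x = t} (theta' A B) := by
  have hθne : theta' A B ≠ ⊥ := theta'_ne_bot A B hlam
  obtain ⟨θr, hθ⟩ : ∃ r : ℝ, theta' A B = (r : R) := by
    rcases hc : theta' A B with _ | r
    · exact absurd hc hθne
    · exact ⟨r, rfl⟩
  set A' := smulM (-θr) A with hA'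
  set C := mmax A' B with hC
  have hTrC : Tr' C ≤ 0 := TrC_le A B θr hθ hTrB
  set S := star' C with hS
  set y : Fin n → R := fun i => Finset.univ.sup (fun k => S i k) with hy
  have hy0 : ∀ i, (0 : R) ≤ y i := fun i =>
    le_trans (star_diag_ge C hn i) (Finset.le_sup (f := fun k => S i k) (Finset.mem_univ i))
  have hyne : ∀ i, y i ≠ ⊥ := by
    intro i hb
    have h0 := hy0 i
    rw [hb, le_bot_iff] at h0
    exact absurd h0 (by simp)
  set x : Fin n → ℝ := fun i => WithBot.unbotD 0 (y i) with hx
  have hvec : ∀ i, ((x i : ℝ) : R) = y i := fun i => coe_unbot'_eq (hyne i)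
  -- the two key entrywise bounds
  have hstep : ∀ (M : Fin n → Fin n → R), (∀ i k, M i k ≤ C i k) →
      ∀ i k, M i k + y k ≤ y i := by
    intro M hM i k
    rw [hy]
    rw [add_finsup]
    apply Finset.sup_le
    intro l _
    calc M i k + S k l ≤ C i k + S k l := add_le_add_left (hM i k) _
      _ ≤ tmul C S i l := entry_le_tmul C S i k l
      _ ≤ S i l := tmul_star_le C hTrC i l
      _ ≤ Finset.univ.sup (fun k => S i k) := Finset.le_sup (f := fun k => S i k)
          (Finset.mem_univ l)
  have hBstep : ∀ i k, B i k + y k ≤ y i :=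
    hstep B (fun i k => le_sup_right)
  have hAstep : ∀ i k, A' i k + y k ≤ y i :=
    hstep A' (fun i k => le_sup_left)
  -- the constraint
  have hconstraint : ∀ i, matVec' B (vec' x) i ≤ vec' x i := by
    intro i
    show Finset.univ.sup (fun k => B i k + ((x k : ℝ) : R)) ≤ ((x i : ℝ) : R)
    rw [hvec i]
    apply Finset.sup_le
    intro k _
    rw [hvec k]
    exact hBstep i k
  -- quadForm ≤ θ
  have hquad_le : quadForm' A x ≤ theta' A B := by
    rw [hθ]
    apply Finset.sup_le
    rintro ⟨i, j⟩ _
    show ((-(x i) : ℝ) : R) + A i j + ((x j : ℝ) : R) ≤ (θr : R)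
    have h1 : A' i j + y j ≤ y i := hAstep i j
    rw [← hvec i, ← hvec j] at h1
    have h2 : A' i j = ((-θr : ℝ) : R) + A i j := rfl
    rw [h2] at h1
    rcases hAij : A i j with _ | a
    · rw [show (none : R) = (⊥ : R) from rfl, WithBot.add_bot, WithBot.bot_add]
      exact bot_le
    · rw [hAij] at h1
      rw [show (some a : R) = ((a : ℝ) : R) from rfl] at h1 ⊢
      rw [← WithBot.coe_add, ← WithBot.coe_add, WithBot.coe_le_coe] at h1 ⊢
      linarith
  -- quadForm ≥ θ
  have hquad_ge : theta' A B ≤ quadForm' A x := lower_bound A B x hconstraint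
  constructor
  · exact ⟨x, hconstraint, le_antisymm hquad_le hquad_ge⟩
  · rintro t ⟨z, hz, rfl⟩
    exact lower_bound A B z hz

/-- Main theorem (value): under the stated hypotheses, the minimum of `x⁻ A x`
over all regular vectors `x` satisfying `B x ≤ x` equals `θ`. -/
theorem constrained_min_eq_theta {n : ℕ} (hn : 0 < n) (A B : Fin n → Fin n → R)
    (hirr : Irred A ∨ Irred B) (hlam : ⊥ < specRad A) (hTrB : Tr B ≤ (0 : R)) :
    IsLeast {t : R | ∃ x : Fin n → ℝ,
      (∀ i, matVec B (vec x) i ≤ vec x i) ∧ quadForm A x = t} (theta A B) :=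
  main_theorem hn A B hlam hTrB
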